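/- arXiv:1406.5812 — 6 statements merged into one kernel-verified Lean document; each statement's English description precedes it below -/
import Mathlib

section
/- Let x, y, z be nonnegative real numbers with x + y + z = 1 and y > 0. Then x·y·z / ((y + x)(y + z)) ≤ (5√5 − 11)/2. -/
theorem stmt_4 (x y z : ℝ) (hx : 0 ≤ x) (hy : 0 < y) (hz : 0 ≤ z)
    (hsum : x + y + z = 1) :
    x * y * z / ((y + x) * (y + z)) ≤ (5 * Real.sqrt 5 - 11) / 2 := by
  set a := Real.sqrt 5 with ha
  have ha5 : a ^ 2 = 5 := Real.sq_sqrt (by norm_num)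
  have ha2 : 2 < a := by nlinarith [Real.sqrt_nonneg 5]
  have hden : (y + x) * (y + z) = y + x * z := by nlinarith [hsum]
  have hdpos : 0 < y + x * z := by positivity
  rw [hden, div_le_iff₀ hdpos]
  have hy1 : y ≤ 1 := by nlinarith
  have hxz : x * z ≤ (1 - y) ^ 2 / 4 := by nlinarith [sq_nonneg (x - z)]
  have hkey : y * (1 - y) ^ 2 ≤ (5 * a - 11) / 2 * (1 + y) ^ 2 := by
    nlinarith [mul_nonneg (sq_nonneg (y - (a - 2))) (by nlinarith : (0:ℝ) ≤ (a + 1) / 2 - y)]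
  rcases le_total y ((5 * a - 11) / 2) with h | h
  · nlinarith [mul_nonneg hx hz, mul_nonneg (sub_nonneg.mpr h) (mul_nonneg hx hz)]
  · nlinarith [mul_nonneg (sub_nonneg.mpr h) (sub_nonneg.mpr hxz)]
end

section
/- Let x, y, z be nonnegative real numbers with x + y + z ≤ 1 and y > 0. Then x·y·z / ((y + x)(y + z)) ≤ (5√5 − 11)/2, and equality in the maximization over the constraint set is attained when x + y + z = 1. -/
private lemma aux_F (c y p : ℝ) (hc0 : 0 < c) (hy : 0 < y) (hyc : 0 ≤ y - c)
    (hp0 : 0 ≤ p) (hPp : 0 ≤ 1 - y - p)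
    (key : y * (1 - y)^2 ≤ c * (1 + y)^2) :
    (y - c) * p^2 / 4 ≤ c * y^2 + c * y * p := by
  have hFP : 0 ≤ c * y^2 + c * y * (1 - y) - (y - c) * (1 - y)^2 / 4 := by nlinarith [key]
  rcases eq_or_lt_of_le hp0 with h0 | h0
  · rw [← h0]; nlinarith
  · have hP0 : 0 < 1 - y := by linarith
    have h2 : 0 ≤ (1 - y) * (c * y^2 + c * y * p - (y - c) * p^2 / 4) := by
      nlinarith [mul_nonneg hp0 hFP,
        mul_nonneg hPp (mul_nonneg hc0.le (mul_nonneg hy.le hy.le)),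
        mul_nonneg (mul_nonneg hyc (mul_nonneg hp0 hPp)) hP0.le]
    nlinarith [nonneg_of_mul_nonneg_right h2 hP0]

private lemma aux_main (c x y z : ℝ) (hc0 : 0 < c) (hx : 0 ≤ x) (hy : 0 < y) (hz : 0 ≤ z)
    (hsum : x + y + z ≤ 1) (key : y * (1 - y)^2 ≤ c * (1 + y)^2) :
    x * y * z ≤ c * ((y + x) * (y + z)) := by
  rcases le_or_gt y c with hyc | hyc
  · nlinarith [mul_nonneg (mul_nonneg hx hz) (sub_nonneg.2 hyc),
      mul_pos hy hy, mul_nonneg hx hy.le, mul_nonneg hz hy.le]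
  · have hycle : (0:ℝ) ≤ y - c := by linarith
    have hF := aux_F c y (x + z) hc0 hy hycle (by positivity) (by linarith) key
    have h3 : 0 ≤ (y - c) * ((x + z)^2/4 - x * z) :=
      mul_nonneg hycle (by nlinarith [sq_nonneg (x - z)])
    nlinarith [hF, h3]

theorem stmt_5 (x y z : ℝ) (hx : 0 ≤ x) (hy : 0 < y) (hz : 0 ≤ z)
    (hsum : x + y + z ≤ 1) :
    x * y * z / ((y + x) * (y + z)) ≤ (5 * Real.sqrt 5 - 11) / 2 ∧
    ∃ x' y' z' : ℝ, 0 ≤ x' ∧ 0 < y' ∧ 0 ≤ z' ∧ x' + y' + z' = 1 ∧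
      x' * y' * z' / ((y' + x') * (y' + z')) = (5 * Real.sqrt 5 - 11) / 2 := by
  have hs : Real.sqrt 5 ^ 2 = 5 := Real.sq_sqrt (by norm_num)
  have hs2 : (11/5 : ℝ) ≤ Real.sqrt 5 := by
    nlinarith [Real.sqrt_nonneg 5, hs]
  have hs3 : Real.sqrt 5 ≤ 9/4 := by
    nlinarith [Real.sqrt_nonneg 5, hs]
  set s := Real.sqrt 5 with hsdef
  have hc0 : 0 < (5 * s - 11) / 2 := by nlinarith
  have hy1 : y ≤ 1 := by linarith
  have key : y * (1 - y)^2 ≤ (5 * s - 11) / 2 * (1 + y)^2 := by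
    have h1 : 0 ≤ (s + 1)/2 - y := by nlinarith
    nlinarith [mul_nonneg (sq_nonneg (y - (s - 2))) h1]
  constructor
  · have hd : 0 < (y + x) * (y + z) := by positivity
    rw [div_le_iff₀ hd]
    exact aux_main _ x y z hc0 hx hy hz hsum key
  · refine ⟨(3 - s)/2, s - 2, (3 - s)/2, by nlinarith, by nlinarith, by nlinarith, by ring, ?_⟩
    rw [div_eq_iff (by nlinarith)]
    linear_combination ((5 - 3 * s)/8) * hs
end

section
/- The maximum of f(x, y, z) = x·y·z / ((y + x)(y + z)) over nonnegative reals with x + y + z = 1 equals (5√5 − 11)/2, and it is attained at x = z = (3 − √5)/2, y = √5 − 2. -/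
theorem stmt_6 :
    IsGreatest
      {r : ℝ | ∃ x y z : ℝ, 0 ≤ x ∧ 0 < y ∧ 0 ≤ z ∧ x + y + z = 1 ∧
        r = x * y * z / ((y + x) * (y + z))}
      ((5 * Real.sqrt 5 - 11) / 2) ∧
    ((3 - Real.sqrt 5) / 2) * (Real.sqrt 5 - 2) * ((3 - Real.sqrt 5) / 2) /
      (((Real.sqrt 5 - 2) + (3 - Real.sqrt 5) / 2) *
        ((Real.sqrt 5 - 2) + (3 - Real.sqrt 5) / 2)) =
      (5 * Real.sqrt 5 - 11) / 2 := by
  have hs : Real.sqrt 5 ^ 2 = 5 := Real.sq_sqrt (by norm_num)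
  have hs2 : 2 < Real.sqrt 5 := by nlinarith [Real.sqrt_nonneg 5]
  have hs3 : Real.sqrt 5 < 3 := by nlinarith [Real.sqrt_nonneg 5]
  have h511 : 0 < 5 * Real.sqrt 5 - 11 := by nlinarith
  have key : ((3 - Real.sqrt 5) / 2) * (Real.sqrt 5 - 2) * ((3 - Real.sqrt 5) / 2) /
      (((Real.sqrt 5 - 2) + (3 - Real.sqrt 5) / 2) *
        ((Real.sqrt 5 - 2) + (3 - Real.sqrt 5) / 2)) =
      (5 * Real.sqrt 5 - 11) / 2 := by
    have hd : ((Real.sqrt 5 - 2) + (3 - Real.sqrt 5) / 2) *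
        ((Real.sqrt 5 - 2) + (3 - Real.sqrt 5) / 2) = (3 - Real.sqrt 5) / 2 := by
      nlinarith
    rw [hd, div_eq_iff (by nlinarith : (3 - Real.sqrt 5) / 2 ≠ 0)]
    nlinarith
  refine ⟨⟨⟨(3 - Real.sqrt 5) / 2, Real.sqrt 5 - 2, (3 - Real.sqrt 5) / 2,
      by linarith, by linarith, by linarith, by ring, key.symm⟩, ?_⟩, key⟩
  rintro r ⟨x, y, z, hx, hy, hz, hsum, rfl⟩
  have hy' : y = 1 - x - z := by linarith
  subst hy'
  have hyx : 0 < 1 - x - z + x := by linarith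
  have hyz : 0 < 1 - x - z + z := by linarith
  rw [div_le_iff₀ (by positivity)]
  have hA : 0 ≤ (x + z - (3 - Real.sqrt 5)) ^ 2 * (x + z - (1 - Real.sqrt 5) / 2) :=
    mul_nonneg (sq_nonneg _) (by nlinarith)
  rcases le_or_gt (2 * (1 - x - z)) (5 * Real.sqrt 5 - 11) with hc | hc
  · nlinarith [mul_nonneg hx hz, mul_nonneg (mul_nonneg hx hz) hy.le,
      mul_nonneg (mul_nonneg hx hz)
        (by linarith : (0:ℝ) ≤ 5 * Real.sqrt 5 - 11 - 2 * (1 - x - z)),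
      mul_pos h511 hy]
  · nlinarith [hA, mul_nonneg (sq_nonneg (x - z))
      (by linarith : (0:ℝ) ≤ 2 * (1 - x - z) - (5 * Real.sqrt 5 - 11)), hs, hs2]
end

section
/- Let h11 ∈ ℂ and h12, t ∈ ℂ^{n-1} with h11 ≠ 0 and t ≠ 0. Then |h11|² |⟨h12, t⟩|² / ((|h11|² + ‖h12‖²)² ‖t‖² − (|h11|² + ‖h12‖²) |⟨h12, t⟩|²) ≤ ‖h12‖² / (|h11|² + ‖h12‖²), provided the denominator is positive. -/
noncomputable def enorm2 {n : ℕ} (x : Fin n → ℂ) : ℝ :=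
  Real.sqrt (∑ i, Complex.normSq (x i))

lemma enorm_eq_norm {n : ℕ} (x : Fin n → ℂ) :
    enorm2 x = ‖(EuclideanSpace.equiv (Fin n) ℂ).symm x‖ := by
  rw [EuclideanSpace.norm_eq, enorm2]
  congr 1
  refine Finset.sum_congr rfl fun i _ => ?_
  rw [← Complex.sq_norm]
  rfl

lemma key_cs {n : ℕ} (x y : Fin n → ℂ) :
    Complex.normSq (∑ i, (starRingEnd ℂ) (x i) * y i) ≤ enorm2 x ^ 2 * enorm2 y ^ 2 := by
  have h := norm_inner_le_norm (𝕜 := ℂ)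
    ((EuclideanSpace.equiv (Fin n) ℂ).symm x) ((EuclideanSpace.equiv (Fin n) ℂ).symm y)
  have hx : enorm2 x = ‖(EuclideanSpace.equiv (Fin n) ℂ).symm x‖ := enorm_eq_norm x
  have hy : enorm2 y = ‖(EuclideanSpace.equiv (Fin n) ℂ).symm y‖ := enorm_eq_norm y
  have hin : (inner ℂ ((EuclideanSpace.equiv (Fin n) ℂ).symm x)
      ((EuclideanSpace.equiv (Fin n) ℂ).symm y) : ℂ) = ∑ i, (starRingEnd ℂ) (x i) * y i := by
    rw [PiLp.inner_apply]
    exact Finset.sum_congr rfl fun i _ => RCLike.inner_apply' _ _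
  rw [hin] at h
  have : Complex.normSq (∑ i, (starRingEnd ℂ) (x i) * y i)
      = ‖∑ i, (starRingEnd ℂ) (x i) * y i‖ ^ 2 := by
    rw [← Complex.sq_norm]
  rw [this, hx, hy]
  nlinarith [norm_nonneg (∑ i, (starRingEnd ℂ) (x i) * y i),
    norm_nonneg ((EuclideanSpace.equiv (Fin n) ℂ).symm x),
    norm_nonneg ((EuclideanSpace.equiv (Fin n) ℂ).symm y)]

theorem stmt_8 {n : ℕ} (h11 : ℂ) (h12 t : Fin (n - 1) → ℂ)
    (hh11 : h11 ≠ 0) (ht : t ≠ 0)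
    (hden : 0 < (Complex.normSq h11 + enorm2 h12 ^ 2) ^ 2 * enorm2 t ^ 2 -
      (Complex.normSq h11 + enorm2 h12 ^ 2) *
        Complex.normSq (∑ i, (starRingEnd ℂ) (h12 i) * t i)) :
    Complex.normSq h11 * Complex.normSq (∑ i, (starRingEnd ℂ) (h12 i) * t i) /
        ((Complex.normSq h11 + enorm2 h12 ^ 2) ^ 2 * enorm2 t ^ 2 -
          (Complex.normSq h11 + enorm2 h12 ^ 2) *
            Complex.normSq (∑ i, (starRingEnd ℂ) (h12 i) * t i)) ≤
      enorm2 h12 ^ 2 / (Complex.normSq h11 + enorm2 h12 ^ 2) := by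
  set a := Complex.normSq h11 with ha
  set b := enorm2 h12 ^ 2 with hb
  set T := enorm2 t ^ 2 with hT
  set s := Complex.normSq (∑ i, (starRingEnd ℂ) (h12 i) * t i) with hs
  have ha0 : 0 < a := Complex.normSq_pos.mpr hh11
  have hb0 : 0 ≤ b := sq_nonneg _
  have hs0 : 0 ≤ s := Complex.normSq_nonneg _
  have hcs : s ≤ b * T := key_cs h12 t
  have hab : 0 < a + b := by linarith
  rw [div_le_div_iff₀ hden hab]
  nlinarith [mul_nonneg hs0 hb0, mul_nonneg (mul_nonneg hb0 hb0) hs0]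
end

section
/- Let h11 ∈ ℂ, h12 ∈ ℂ^{n-1} (row), h21 ∈ ℂ^{n-1} (column), H22 ∈ ℂ^{(n-1)×(n-1)} invertible, with |h11|² + ‖h12‖² + ‖h21‖² + ‖H22‖_F² = 1. Then |h12 H22^{-1} h21|² / ((1 + ‖h12 H22^{-1}‖²)(1 + ‖H22^{-1} h21‖²)) ≤ (5√5 − 11)/2. -/
set_option maxHeartbeats 1000000

noncomputable def enormC {n : ℕ} (x : Fin n → ℂ) : ℝ :=
  Real.sqrt (∑ i, Complex.normSq (x i))

noncomputable def fnorm {m n : ℕ} (A : Matrix (Fin m) (Fin n) ℂ) : ℝ :=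
  Real.sqrt (∑ i, ∑ j, Complex.normSq (A i j))

lemma enorm_sq' {n : ℕ} (x : Fin n → ℂ) : enormC x ^ 2 = ∑ i, Complex.normSq (x i) := by
  rw [enormC, Real.sq_sqrt (Finset.sum_nonneg fun i _ => Complex.normSq_nonneg _)]

lemma fnorm_sq' {m n : ℕ} (A : Matrix (Fin m) (Fin n) ℂ) :
    fnorm A ^ 2 = ∑ i, ∑ j, Complex.normSq (A i j) := by
  rw [fnorm, Real.sq_sqrt (Finset.sum_nonneg fun i _ =>
    Finset.sum_nonneg fun j _ => Complex.normSq_nonneg (A i j))]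

lemma cs' {m : ℕ} (u w : Fin m → ℂ) :
    Complex.normSq (dotProduct u w) ≤
      (∑ i, Complex.normSq (u i)) * (∑ i, Complex.normSq (w i)) := by
  have h1 : ‖dotProduct u w‖ ≤ ∑ i, ‖u i‖ * ‖w i‖ := by
    refine (norm_sum_le _ _).trans ?_
    simp [norm_mul]
  have h2 : (∑ i, ‖u i‖ * ‖w i‖) ^ 2 ≤
      (∑ i, ‖u i‖ ^ 2) * (∑ i, ‖w i‖ ^ 2) :=
    Finset.sum_mul_sq_le_sq_mul_sq _ _ _
  have h3 : Complex.normSq (dotProduct u w)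
      ≤ (∑ i, ‖u i‖ * ‖w i‖) ^ 2 := by
    rw [← Complex.sq_norm]
    exact pow_le_pow_left₀ (norm_nonneg _) h1 2
  calc Complex.normSq (dotProduct u w)
      ≤ (∑ i, ‖u i‖ ^ 2) * (∑ i, ‖w i‖ ^ 2) := h3.trans h2
    _ = _ := by simp [Complex.sq_norm]

theorem stmt_10 {n : ℕ} (h11 : ℂ) (h12 h21 : Fin (n - 1) → ℂ)
    (H22 : Matrix (Fin (n - 1)) (Fin (n - 1)) ℂ) (hH22 : IsUnit H22.det)
    (hnorm : Complex.normSq h11 + enormC h12 ^ 2 + enormC h21 ^ 2 + fnorm H22 ^ 2 = 1) :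
    Complex.normSq (dotProduct (Matrix.vecMul h12 H22⁻¹) h21) /
        ((1 + enormC (Matrix.vecMul h12 H22⁻¹) ^ 2) *
          (1 + enormC (Matrix.mulVec H22⁻¹ h21) ^ 2)) ≤
      (5 * Real.sqrt 5 - 11) / 2 := by
  set u := Matrix.vecMul h12 H22⁻¹ with hu
  set v := Matrix.mulVec H22⁻¹ h21 with hv
  set Su := enormC u ^ 2 with hSu
  set Sv := enormC v ^ 2 with hSv
  set T := Complex.normSq (dotProduct u h21) with hT
  -- reconstruction
  have hh12 : Matrix.vecMul u H22 = h12 := by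
    rw [hu, Matrix.vecMul_vecMul, Matrix.nonsing_inv_mul _ hH22, Matrix.vecMul_one]
  have hh21 : Matrix.mulVec H22 v = h21 := by
    rw [hv, Matrix.mulVec_mulVec, Matrix.mul_nonsing_inv _ hH22, Matrix.one_mulVec]
  -- basic nonneg
  have hSu0 : (0:ℝ) ≤ Su := by rw [hSu]; exact sq_nonneg _
  have hSv0 : (0:ℝ) ≤ Sv := by rw [hSv]; exact sq_nonneg _
  have hT0 : (0:ℝ) ≤ T := Complex.normSq_nonneg _
  -- (A)
  have hA : T ≤ Su * (enormC h21 ^ 2) := by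
    rw [hT, hSu, enorm_sq', enorm_sq']; exact cs' u h21
  -- (B)
  have hdp : dotProduct u h21 = dotProduct h12 v := by
    rw [hv, Matrix.dotProduct_mulVec, hu]
  have hB : T ≤ (enormC h12 ^ 2) * Sv := by
    rw [hT, hdp, hSv, enorm_sq', enorm_sq']; exact cs' h12 v
  -- (C)
  have hAv : (∑ i, Complex.normSq (Matrix.mulVec H22 v i)) ≤
      (fnorm H22 ^ 2) * Sv := by
    rw [fnorm_sq', hSv, enorm_sq', Finset.sum_mul]
    refine Finset.sum_le_sum fun i _ => ?_
    exact cs' (H22 i) v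
  have hC : T ≤ Su * ((fnorm H22 ^ 2) * Sv) := by
    have : T ≤ Su * (∑ i, Complex.normSq (Matrix.mulVec H22 v i)) := by
      rw [hT, ← hh21, hSu, enorm_sq']
      exact cs' u (Matrix.mulVec H22 v)
    exact this.trans (by
      exact mul_le_mul_of_nonneg_left hAv hSu0)
  -- constraint
  have hcon : enormC h12 ^ 2 + enormC h21 ^ 2 + fnorm H22 ^ 2 ≤ 1 := by
    nlinarith [Complex.normSq_nonneg h11]
  -- combine: T * (1 + Su + Sv) ≤ Su * Sv
  have hkey : T * (1 + Su + Sv) ≤ Su * Sv := by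
    nlinarith [mul_le_mul_of_nonneg_left hA hSv0, mul_le_mul_of_nonneg_left hB hSu0,
      mul_nonneg hSu0 hSv0, sq_nonneg (enormC h12), sq_nonneg (enormC h21), sq_nonneg (fnorm H22)]
  -- √5 facts
  have hw : Real.sqrt 5 ^ 2 = 5 := Real.sq_sqrt (by norm_num)
  have hw2 : (2:ℝ) ≤ Real.sqrt 5 := by
    nlinarith [Real.sqrt_nonneg 5]
  set w := Real.sqrt 5 with hwdef
  -- final real inequality
  have h5w : (11:ℝ) ≤ 5 * w := by nlinarith
  have hw3 : w ≤ 3 := by nlinarith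
  have hineq : 2 * (Su * Sv) ≤ (5 * w - 11) * ((1 + Su + Sv) * ((1 + Su) * (1 + Sv))) := by
    rcases le_or_gt 2 ((5 * w - 11) * (1 + Su + Sv)) with h | h
    · nlinarith [mul_nonneg hSu0 hSv0, mul_le_mul_of_nonneg_right h
        (by nlinarith [mul_nonneg hSu0 hSv0] : (0:ℝ) ≤ 1 + Su + Sv + Su * Sv)]
    · have key : (0:ℝ) ≤ (5 * w - 11) * ((Su + Sv - 1 - w)^2 * (2 * (Su + Sv) + 3 - w)) := by
        apply mul_nonneg (by linarith)
        apply mul_nonneg (sq_nonneg _)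
        nlinarith
      have dterm : (0:ℝ) ≤ (Su - Sv)^2 * (2 - (5 * w - 11) * (1 + Su + Sv)) :=
        mul_nonneg (sq_nonneg _) (by linarith)
      nlinarith [key, dterm, hw]
  have hden : (0:ℝ) < (1 + Su) * (1 + Sv) := by nlinarith
  rw [div_le_iff₀ hden]
  have h15 : (0:ℝ) < 1 + Su + Sv := by nlinarith
  nlinarith [hkey, hineq, mul_pos hden h15]
end

section
/- For x, y > 0 with x + y < 1 and z = 1 − x − y: the function f(x,y) = x·y·(1−x−y) / ((y+x)(y+1−x−y)) = x·y·(1−x−y)/((x+y)(1−x)) attains its maximum over the open triangle {x>0, y>0, x+y<1} at the unique critical point x = (3−√5)/2, y = √5 − 2, with value (5√5−11)/2. -/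
noncomputable def f16 (p : ℝ × ℝ) : ℝ :=
  p.1 * p.2 * (1 - p.1 - p.2) / ((p.1 + p.2) * (1 - p.1))

def S16 : Set (ℝ × ℝ) := {p | 0 < p.1 ∧ 0 < p.2 ∧ p.1 + p.2 < 1}

theorem stmt_16 :
    ((3 - Real.sqrt 5) / 2, Real.sqrt 5 - 2) ∈ S16 ∧
    f16 ((3 - Real.sqrt 5) / 2, Real.sqrt 5 - 2) = (5 * Real.sqrt 5 - 11) / 2 ∧
    (∀ p ∈ S16, f16 p ≤ (5 * Real.sqrt 5 - 11) / 2) ∧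
    (∀ p ∈ S16, f16 p = (5 * Real.sqrt 5 - 11) / 2 →
      p = ((3 - Real.sqrt 5) / 2, Real.sqrt 5 - 2)) := by
  set r := Real.sqrt 5 with hrdef
  have hr5 : r ^ 2 = 5 := Real.sq_sqrt (by norm_num)
  have hr2 : 2 < r := by nlinarith [Real.sqrt_nonneg 5]
  have hr3 : r < 3 := by nlinarith [Real.sqrt_nonneg 5]
  have hM : 0 < (5 * r - 11) / 2 := by nlinarith
  refine ⟨⟨by dsimp; linarith, by dsimp; linarith, by dsimp; linarith⟩, ?_, ?_, ?_⟩
  · show ((3 - r) / 2) * (r - 2) * (1 - (3 - r) / 2 - (r - 2)) /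
      (((3 - r) / 2 + (r - 2)) * (1 - (3 - r) / 2)) = (5 * r - 11) / 2
    have hd : ((3 - r) / 2 + (r - 2)) * (1 - (3 - r) / 2) ≠ 0 := by nlinarith
    rw [div_eq_iff hd]
    linear_combination ((5 - 3 * r) / 8) * hr5
  · rintro ⟨x, y⟩ ⟨hx, hy, hs⟩
    show x * y * (1 - x - y) / ((x + y) * (1 - x)) ≤ (5 * r - 11) / 2
    dsimp at hx hy hs
    have hd : 0 < (x + y) * (1 - x) := by nlinarith
    rw [div_le_iff₀ hd]
    rcases le_or_gt y ((5 * r - 11) / 2) with h | h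
    · nlinarith [mul_nonneg (mul_nonneg hx.le (by linarith : (0:ℝ) ≤ 1 - x - y))
        (by linarith : (0:ℝ) ≤ (5 * r - 11) / 2 - y), mul_pos hM hy]
    · nlinarith [mul_nonneg (sq_nonneg (y - (r - 2))) (by linarith : (0:ℝ) ≤ (1 + r) / 2 - y),
        mul_nonneg (sq_nonneg (1 - 2 * x - y)) (by linarith : (0:ℝ) ≤ y - (5 * r - 11) / 2)]
  · rintro ⟨x, y⟩ ⟨hx, hy, hs⟩ heq
    dsimp at hx hy hs
    have hd : 0 < (x + y) * (1 - x) := by nlinarith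
    have heq' : x * y * (1 - x - y) = (5 * r - 11) / 2 * ((x + y) * (1 - x)) := by
      have : x * y * (1 - x - y) / ((x + y) * (1 - x)) = (5 * r - 11) / 2 := heq
      rw [div_eq_iff hd.ne'] at this
      linarith [this]
    -- y must exceed M
    have hyM : (5 * r - 11) / 2 < y := by
      by_contra h
      push_neg at h
      nlinarith [mul_nonneg (mul_nonneg hx.le (by linarith : (0:ℝ) ≤ 1 - x - y))
        (by linarith : (0:ℝ) ≤ (5 * r - 11) / 2 - y), mul_pos hM hy]
    have hA : 0 ≤ (y - (r - 2)) ^ 2 * ((1 + r) / 2 - y) :=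
      mul_nonneg (sq_nonneg _) (by linarith)
    have hB : 0 ≤ (1 - 2 * x - y) ^ 2 * (y - (5 * r - 11) / 2) :=
      mul_nonneg (sq_nonneg _) (by linarith)
    have hsum : (y - (r - 2)) ^ 2 * ((1 + r) / 2 - y)
        + (1 - 2 * x - y) ^ 2 * (y - (5 * r - 11) / 2) = 0 := by
      linear_combination (-4 : ℝ) * heq' + (-(3 + 4 * y - r) / 2) * hr5
    have hA0 : (y - (r - 2)) ^ 2 * ((1 + r) / 2 - y) = 0 := by linarith
    have hB0 : (1 - 2 * x - y) ^ 2 * (y - (5 * r - 11) / 2) = 0 := by linarith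
    have hy' : y = r - 2 := by
      have h1 : (y - (r - 2)) ^ 2 = 0 := by
        rcases mul_eq_zero.1 hA0 with h | h
        · exact h
        · exfalso; nlinarith
      have := pow_eq_zero_iff (n := 2) (by norm_num) |>.1 h1
      linarith [sub_eq_zero.1 this]
    have hx' : x = (3 - r) / 2 := by
      have h1 : (1 - 2 * x - y) ^ 2 = 0 := by
        rcases mul_eq_zero.1 hB0 with h | h
        · exact h
        · exfalso; nlinarith
      have := pow_eq_zero_iff (n := 2) (by norm_num) |>.1 h1
      rw [hy'] at this
      linarith
    simp [Prod.ext_iff, hx', hy']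
end
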